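/- Let H and K be finite connected graphs with V(H) ∩ V(K) = {v}, let G = H ∪ K, and let ω be a weight function on E(G). Suppose there are integers a ≥ 2 and b ≥ 0 such that π_t(K_ω, v) = a·t + b for every t ≥ 1. Let G̃ be the graph with vertex set V(H) together with a new vertex u and edge set E(H) ∪ {vu}, weighted by ω̃(vu) = a and ω̃(e) = ω(e) for e ∈ E(H). Then for every goal vertex x ∈ V(H), π(G_ω, x) = π(G̃_ω̃, x) + b. -/

import Mathlib

open Finset

variable {V : Type*}

/-- Applying the pebbling move `m = (v, u)` on `G_ω`: remove `ω v u` pebbles at `v`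
and add one pebble at `u`. -/
def moveFn [DecidableEq V] (ω : V → V → ℕ) (m : V × V) (p : V → ℤ) : V → ℤ :=
  fun w => if w = m.1 then p m.1 - ω m.1 m.2 else if w = m.2 then p m.2 + 1 else p w

/-- The pebble function obtained after applying a sequence of pebbling moves. -/
def applyList [DecidableEq V] (ω : V → V → ℕ) : List (V × V) → (V → ℤ) → (V → ℤ)
  | [], p => p
  | m :: l, p => applyList ω l (moveFn ω m p)

/-- A pebbling sequence is executable from `p` if every move is along an edge of `G`
and every intermediate pebble function is nonnegative. -/
def Executable [DecidableEq V] (G : SimpleGraph V) (ω : V → V → ℕ) :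
    (V → ℤ) → List (V × V) → Prop
  | _, [] => True
  | p, m :: l => G.Adj m.1 m.2 ∧ (∀ w, 0 ≤ moveFn ω m p w) ∧ Executable G ω (moveFn ω m p) l

/-- `x` is `t`-reachable from `p` on the weighted graph `G_ω`. -/
def Reaches [DecidableEq V] (G : SimpleGraph V) (ω : V → V → ℕ) (p : V → ℤ) (x : V)
    (t : ℕ) : Prop :=
  ∃ l : List (V × V), Executable G ω p l ∧ (t : ℤ) ≤ applyList ω l p x

/-- A pebble distribution is a nonnegative pebble function. -/
def IsDistrib (p : V → ℤ) : Prop := ∀ v, 0 ≤ p v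

/-- The size of a pebble distribution: the total number of pebbles. -/
def size [Fintype V] (p : V → ℤ) : ℤ := ∑ v, p v

/-- The `t`-pebbling number `π_t(G_ω, x)`: the least `m` such that `x` is `t`-reachable
from every pebble distribution of size `m`. -/
noncomputable def piT [Fintype V] [DecidableEq V] (G : SimpleGraph V) (ω : V → V → ℕ)
    (x : V) (t : ℕ) : ℕ :=
  sInf {m : ℕ | ∀ p : V → ℤ, IsDistrib p → size p = (m : ℤ) → Reaches G ω p x t}

/-- `p_S` for a multiset `S` of pebbling moves:
`p_S(w) = p(w) + d⁻(w) − ∑ ω(w,u)` over arcs leaving `w`. -/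
def applyMS [DecidableEq V] (ω : V → V → ℕ) (S : Multiset (V × V)) (p : V → ℤ) : V → ℤ :=
  fun w => p w + (Multiset.card (S.filter (fun m => m.2 = w)) : ℤ)
    - ((S.filter (fun m => m.1 = w)).map (fun m => (ω m.1 m.2 : ℤ))).sum

/-- The transition digraph of `S` contains a directed cycle. -/
def HasCycle (S : Multiset (V × V)) : Prop :=
  ∃ l : List (V × V), l ≠ [] ∧ (l : Multiset (V × V)) ≤ S ∧
    List.Chain' (fun a b => a.2 = b.1) l ∧
    l.getLast?.map Prod.snd = l.head?.map Prod.fst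

/-- A multiset of pebbling moves is acyclic if its transition digraph has no directed cycle. -/
def Acyclic (S : Multiset (V × V)) : Prop := ¬HasCycle S

/-- A list of pebbling moves is regular if each move is an initial move of the multiset of
remaining moves: the source of each move has in-degree zero among the remaining moves. -/
def RegularSeq : List (V × V) → Prop
  | [] => True
  | m :: l => (∀ m' ∈ m :: l, m'.2 ≠ m.1) ∧ RegularSeq l
attribute [local instance] Classical.propDecidable

/-- The graph obtained from the induced subgraph of `G` on `A` by attaching a new pendant
vertex `u` (the `Sum.inr` vertex) to the vertex `v`. -/
def attachPendant {V : Type*} (G : SimpleGraph V) (A : Set V) (v : V) :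
    SimpleGraph (↥A ⊕ Unit) where
  Adj x y :=
    match x, y with
    | Sum.inl a, Sum.inl b => G.Adj a b
    | Sum.inl a, Sum.inr _ => (a : V) = v
    | Sum.inr _, Sum.inl b => (b : V) = v
    | Sum.inr _, Sum.inr _ => False
  symm := by
    refine ⟨?_⟩
    rintro (a | u) (b | u') h
    · exact G.symm.symm _ _ h
    · exact h
    · exact h
    · exact h
  loopless := by
    refine ⟨?_⟩
    rintro (a | u) h
    · exact G.loopless.irrefl a h
    · exact h

/-- Weight function on the graph with an attached pendant vertex: the new edge has
weight `a`, the old edges keep their weight. -/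
def attachWeight {V : Type*} (ω : V → V → ℕ) (A : Set V) (a : ℕ) :
    ↥A ⊕ Unit → ↥A ⊕ Unit → ℕ
  | Sum.inl b, Sum.inl c => ω b c
  | Sum.inl _, Sum.inr _ => a
  | Sum.inr _, Sum.inl _ => a
  | Sum.inr _, Sum.inr _ => 0


section Lemmas
variable {V : Type*} [DecidableEq V]

/-- in-count of arcs into `w`. -/
def inC (S : Multiset (V × V)) (w : V) : ℤ :=
  (Multiset.card (S.filter (fun m => m.2 = w)) : ℤ)

/-- weighted out-sum of arcs leaving `w`. -/
def outC (ω : V → V → ℕ) (S : Multiset (V × V)) (w : V) : ℤ :=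
  ((S.filter (fun m => m.1 = w)).map (fun m => (ω m.1 m.2 : ℤ))).sum

lemma applyMS_def (ω : V → V → ℕ) (S : Multiset (V × V)) (p : V → ℤ) (w : V) :
    applyMS ω S p w = p w + inC S w - outC ω S w := rfl

@[simp] lemma inC_zero (w : V) : inC (0 : Multiset (V × V)) w = 0 := rfl

@[simp] lemma outC_zero (ω : V → V → ℕ) (w : V) : outC ω (0 : Multiset (V × V)) w = 0 := rfl

lemma inC_add (S T : Multiset (V × V)) (w : V) : inC (S + T) w = inC S w + inC T w := by
  simp [inC, Multiset.filter_add]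

lemma outC_add (ω : V → V → ℕ) (S T : Multiset (V × V)) (w : V) :
    outC ω (S + T) w = outC ω S w + outC ω T w := by
  simp [outC, Multiset.filter_add]

lemma inC_cons (m : V × V) (S : Multiset (V × V)) (w : V) :
    inC (m ::ₘ S) w = inC S w + (if m.2 = w then 1 else 0) := by
  by_cases h : m.2 = w <;> simp [inC, Multiset.filter_cons, h] <;> ring

lemma outC_cons (ω : V → V → ℕ) (m : V × V) (S : Multiset (V × V)) (w : V) :
    outC ω (m ::ₘ S) w = outC ω S w + (if m.1 = w then (ω m.1 m.2 : ℤ) else 0) := by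
  by_cases h : m.1 = w <;> simp [outC, Multiset.filter_cons, h] <;> ring

lemma inC_nonneg (S : Multiset (V × V)) (w : V) : 0 ≤ inC S w := by
  simp [inC]

lemma outC_nonneg (ω : V → V → ℕ) (S : Multiset (V × V)) (w : V) : 0 ≤ outC ω S w := by
  apply Multiset.sum_nonneg
  intro z hz
  obtain ⟨m, _, rfl⟩ := Multiset.mem_map.1 hz
  positivity

lemma inC_eq_zero (S : Multiset (V × V)) (w : V) (h : ∀ m ∈ S, m.2 ≠ w) : inC S w = 0 := by
  simp only [inC]
  rw [Multiset.filter_eq_nil.2 (fun m hm => h m hm)]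
  rfl

lemma outC_eq_zero (ω : V → V → ℕ) (S : Multiset (V × V)) (w : V) (h : ∀ m ∈ S, m.1 ≠ w) :
    outC ω S w = 0 := by
  simp only [outC]
  rw [Multiset.filter_eq_nil.2 (fun m hm => h m hm)]
  rfl

lemma applyMS_zero (ω : V → V → ℕ) (p : V → ℤ) : applyMS ω 0 p = p := by
  funext w; simp [applyMS_def]

/-- applying a cons at multiset level equals one move then the rest. -/
lemma applyMS_cons (ω : V → V → ℕ) (m : V × V) (S : Multiset (V × V)) (p : V → ℤ)
    (hm : m.1 ≠ m.2) :
    applyMS ω (m ::ₘ S) p = applyMS ω S (moveFn ω m p) := by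
  funext w
  have hm' : m.2 ≠ m.1 := Ne.symm hm
  simp only [applyMS_def, inC_cons, outC_cons, moveFn]
  by_cases h1 : w = m.1
  · subst h1
    rw [if_pos rfl, if_neg hm', if_pos rfl]
    ring
  · by_cases h2 : w = m.2
    · subst h2
      rw [if_pos rfl, if_neg (Ne.symm h1), if_neg h1, if_pos rfl]
      ring
    · rw [if_neg (fun h => h2 h.symm), if_neg (fun h => h1 h.symm), if_neg h1, if_neg h2]
      ring

lemma applyList_eq_applyMS (G : SimpleGraph V) (ω : V → V → ℕ) :
    ∀ (l : List (V × V)) (p : V → ℤ), (∀ m ∈ l, m.1 ≠ m.2) →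
      applyList ω l p = applyMS ω (l : Multiset (V × V)) p
  | [], p, _ => by simp [applyList, applyMS_zero]
  | m :: l, p, h => by
    have h1 : m.1 ≠ m.2 := h m List.mem_cons_self
    rw [show ((m :: l : List (V × V)) : Multiset (V × V)) = m ::ₘ (l : Multiset (V × V)) from rfl,
      applyMS_cons ω m _ p h1]
    exact applyList_eq_applyMS G ω l (moveFn ω m p) (fun m' hm' => h m' (List.mem_cons_of_mem _ hm'))

end Lemmas

section Lemmas2
variable {V : Type*} [DecidableEq V] {G : SimpleGraph V} {ω : V → V → ℕ}

lemma exec_adj : ∀ {l : List (V × V)} {p : V → ℤ}, Executable G ω p l →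
    ∀ m ∈ l, G.Adj m.1 m.2
  | [], _, _ => by intro m hm; cases hm
  | m :: l, p, h => by
    intro m' hm'
    rcases List.mem_cons.1 hm' with rfl | hm'
    · exact h.1
    · exact exec_adj h.2.2 m' hm'

lemma exec_nonneg : ∀ {l : List (V × V)} {p : V → ℤ}, Executable G ω p l →
    IsDistrib p → IsDistrib (applyList ω l p)
  | [], p, _, hp => hp
  | m :: l, p, h, hp => by exact exec_nonneg (l := l) h.2.2 h.2.1

lemma exec_append : ∀ {l₁ l₂ : List (V × V)} {p : V → ℤ},
    Executable G ω p l₁ → Executable G ω (applyList ω l₁ p) l₂ →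
    Executable G ω p (l₁ ++ l₂)
  | [], l₂, p, _, h₂ => h₂
  | m :: l₁, l₂, p, h₁, h₂ => by exact ⟨h₁.1, h₁.2.1, exec_append h₁.2.2 h₂⟩

lemma applyList_append (ω : V → V → ℕ) : ∀ (l₁ l₂ : List (V × V)) (p : V → ℤ),
    applyList ω (l₁ ++ l₂) p = applyList ω l₂ (applyList ω l₁ p)
  | [], l₂, p => rfl
  | m :: l₁, l₂, p => applyList_append ω l₁ l₂ (moveFn ω m p)

lemma moveFn_mono {p q : V → ℤ} (m : V × V) (h : ∀ w, p w ≤ q w) :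
    ∀ w, moveFn ω m p w ≤ moveFn ω m q w := by
  intro w
  unfold moveFn
  split_ifs <;> simp [h _, sub_le_sub_right, add_le_add_right]

lemma exec_mono : ∀ {l : List (V × V)} {p q : V → ℤ}, (∀ w, p w ≤ q w) →
    Executable G ω p l →
    Executable G ω q l ∧ ∀ w, applyList ω l p w ≤ applyList ω l q w
  | [], p, q, hle, _ => ⟨trivial, hle⟩
  | m :: l, p, q, hle, h => by
    have h1 := moveFn_mono (ω := ω) m hle
    have ih := exec_mono h1 h.2.2
    exact ⟨⟨h.1, fun w => le_trans (h.2.1 w) (h1 w), ih.1⟩, ih.2⟩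

lemma reaches_mono {p q : V → ℤ} {x : V} {t : ℕ} (hle : ∀ w, p w ≤ q w)
    (h : Reaches G ω p x t) : Reaches G ω q x t := by
  obtain ⟨l, hex, hval⟩ := h
  obtain ⟨hex', hval'⟩ := exec_mono hle hex
  exact ⟨l, hex', le_trans hval (hval' x)⟩

lemma pump' {y z : V} (hadj : G.Adj y z) :
    ∀ (c : ℕ) (p : V → ℤ), IsDistrib p → (c : ℤ) * ω y z ≤ p y →
      ∃ l, Executable G ω p l ∧ p z + c ≤ applyList ω l p z
  | 0, p, hp, _ => ⟨[], trivial, by simp [applyList]⟩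
  | c + 1, p, hp, hle => by
    have hyz : y ≠ z := G.ne_of_adj hadj
    have hw2 : (0 : ℤ) ≤ ω y z := by positivity
    have hge : (c : ℤ) * ω y z + ω y z ≤ p y := by push_cast at hle ⊢; linarith
    have hnn : ∀ w, 0 ≤ moveFn ω (y, z) p w := by
      intro w
      unfold moveFn
      split_ifs with h1 h2
      · simp only
        nlinarith [hp y]
      · linarith [hp z]
      · exact hp w
    have hd : IsDistrib (moveFn ω (y, z) p) := hnn
    have hymv : moveFn ω (y, z) p y = p y - ω y z := by simp [moveFn]
    have hy : (c : ℤ) * ω y z ≤ moveFn ω (y, z) p y := by rw [hymv]; linarith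
    obtain ⟨l, hex, hval⟩ := pump' hadj c (moveFn ω (y, z) p) hd hy
    refine ⟨(y, z) :: l, ⟨hadj, hnn, hex⟩, ?_⟩
    have hzval : moveFn ω (y, z) p z = p z + 1 := by
      unfold moveFn; simp [hyz, Ne.symm hyz]
    rw [show applyList ω ((y,z) :: l) p = applyList ω l (moveFn ω (y,z) p) from rfl]
    push_cast
    push_cast at hval
    linarith [hval]

/-- weight product along a walk (via darts) -/
def wprod (ω : V → V → ℕ) {y x : V} (W : G.Walk y x) : ℕ :=
  (W.darts.map (fun d => ω d.toProd.1 d.toProd.2)).prod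

lemma wprod_cons {y z x : V} (h : G.Adj y z) (W : G.Walk z x) :
    wprod ω (SimpleGraph.Walk.cons h W) = ω y z * wprod ω W := by
  simp [wprod]

lemma wprod_pos (hω : ∀ u w : V, G.Adj u w → 2 ≤ ω u w) {y x : V} (W : G.Walk y x) :
    1 ≤ wprod ω W := by
  induction W with
  | nil => simp [wprod]
  | cons h W ih =>
    have h2 := hω _ _ h
    rw [wprod_cons]
    have := Nat.mul_le_mul (le_trans (by norm_num : (1:ℕ) ≤ 2) h2) ih
    simpa using this

lemma walkReach (hω : ∀ u w : V, G.Adj u w → 2 ≤ ω u w) {y x : V} (W : G.Walk y x) :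
    ∀ (p : V → ℤ), IsDistrib p → (wprod ω W : ℤ) ≤ p y → Reaches G ω p x 1 := by
  induction W with
  | nil =>
    intro p hp hle
    exact ⟨[], trivial, by simp only [applyList]; simpa [wprod] using hle⟩
  | @cons y z x h W ih =>
    intro p hp hle
    have hpr : (wprod ω W : ℤ) * ω y z ≤ p y := by
      rw [wprod_cons] at hle
      push_cast at hle ⊢
      linarith
    obtain ⟨l₁, hex₁, hval₁⟩ := pump' h (wprod ω W) p hp hpr
    have hd₁ : IsDistrib (applyList ω l₁ p) := exec_nonneg hex₁ hp
    have hz : (wprod ω W : ℤ) ≤ applyList ω l₁ p z := le_trans (by linarith [hp z]) hval₁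
    obtain ⟨l₂, hex₂, hval₂⟩ := ih (applyList ω l₁ p) hd₁ hz
    exact ⟨l₁ ++ l₂, exec_append hex₁ hex₂, by rwa [applyList_append]⟩

end Lemmas2

section Lemmas3
variable {V : Type*} [Fintype V] [DecidableEq V] {G : SimpleGraph V} {ω : V → V → ℕ}

lemma exists_pos_of_size_pos {p : V → ℤ} (hp : IsDistrib p) (h : 0 < size p) :
    ∃ y, 1 ≤ p y := by
  by_contra hc
  push_neg at hc
  have : size p ≤ 0 := by
    apply Finset.sum_nonpos
    intro y _
    have := hc y
    linarith
  linarith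

lemma size_update {p : V → ℤ} (y : V) :
    size (Function.update p y (p y - 1)) = size p - 1 := by
  unfold size
  rw [Finset.sum_update_of_mem (Finset.mem_univ y)]
  have := Finset.add_sum_erase Finset.univ p (Finset.mem_univ y)
  rw [show (Finset.univ : Finset V) \ {y} = Finset.univ.erase y from by
    ext w; simp [Finset.mem_erase, and_comm]]
  linarith

lemma sub_distrib (k : ℕ) : ∀ (d : ℕ) (p : V → ℤ), IsDistrib p → size p = (k : ℤ) + d →
    ∃ p', IsDistrib p' ∧ (∀ w, p' w ≤ p w) ∧ size p' = (k : ℤ)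
  | 0, p, hp, hs => ⟨p, hp, fun w => le_refl _, by simpa using hs⟩
  | d + 1, p, hp, hs => by
    have hpos : 0 < size p := by rw [hs]; push_cast; positivity
    obtain ⟨y, hy⟩ := exists_pos_of_size_pos hp hpos
    set p₁ := Function.update p y (p y - 1) with hp₁
    have hd₁ : IsDistrib p₁ := by
      intro w
      by_cases hw : w = y
      · subst hw
        rw [hp₁, Function.update_self]
        linarith
      · rw [hp₁, Function.update_of_ne hw]
        exact hp w
    have hs₁ : size p₁ = (k : ℤ) + d := by
      rw [hp₁, size_update]; push_cast at hs ⊢; linarith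
    obtain ⟨p', h1, h2, h3⟩ := sub_distrib k d p₁ hd₁ hs₁
    refine ⟨p', h1, fun w => le_trans (h2 w) ?_, h3⟩
    by_cases hw : w = y
    · subst hw
      rw [hp₁, Function.update_self]
      linarith
    · rw [hp₁, Function.update_of_ne hw]

/-- If `m` is in the pebbling set, every distribution of size at least `m` reaches. -/
lemma reaches_of_mem {x : V} {t m : ℕ}
    (h : ∀ p : V → ℤ, IsDistrib p → size p = (m : ℤ) → Reaches G ω p x t)
    {q : V → ℤ} (hq : IsDistrib q) (hle : (m : ℤ) ≤ size q) : Reaches G ω q x t := by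
  obtain ⟨d, hd⟩ : ∃ d : ℕ, size q = (m : ℤ) + d := by
    refine ⟨(size q - m).toNat, ?_⟩
    rw [Int.toNat_of_nonneg (by linarith)]
    ring
  obtain ⟨p', h1, h2, h3⟩ := sub_distrib m d q hq hd
  exact reaches_mono h2 (h p' h1 h3)

/-- Nonemptiness of the pebbling set for a connected weighted graph. -/
lemma pset_nonempty (hG : G.Connected) (hω : ∀ u w : V, G.Adj u w → 2 ≤ ω u w) (x : V) :
    ∃ m : ℕ, ∀ p : V → ℤ, IsDistrib p → size p = (m : ℤ) → Reaches G ω p x 1 := by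
  have hWalk : ∀ y : V, Nonempty (G.Walk y x) := fun y => hG.preconnected y x
  set N : V → ℕ := fun y => wprod ω (hWalk y).some with hN
  refine ⟨1 + ∑ y, (N y - 1), ?_⟩
  intro p hp hs
  have hN1 : ∀ y, 1 ≤ N y := fun y => wprod_pos hω _
  have hex : ∃ y, (N y : ℤ) ≤ p y := by
    by_contra hc
    push_neg at hc
    have hb : ∀ y, p y ≤ (N y : ℤ) - 1 := fun y => by linarith [hc y]
    have h1 : size p ≤ ∑ y, ((N y : ℤ) - 1) :=
      Finset.sum_le_sum (fun y _ => hb y)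
    have h2 : ∑ y, ((N y : ℤ) - 1) = ∑ y, ((N y - 1 : ℕ) : ℤ) := by
      apply Finset.sum_congr rfl
      intro y _
      have := hN1 y
      push_cast [Nat.cast_sub this]
      ring
    rw [hs] at h1
    rw [h2] at h1
    push_cast at h1
    linarith
  obtain ⟨y, hy⟩ := hex
  exact walkReach hω (hWalk y).some p hp hy

/-- The empty distribution does not reach when all weights are at least 2. -/
lemma zero_not_reach (hω : ∀ u w : V, G.Adj u w → 2 ≤ ω u w) {p : V → ℤ}
    (hp : IsDistrib p) (hs : size p = 0) (x : V) {t : ℕ} (ht : 1 ≤ t) :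
    ¬Reaches G ω p x t := by
  have hzero : ∀ w, p w = 0 := by
    intro w
    have h1 := Finset.sum_eq_zero_iff_of_nonneg (fun y (_ : y ∈ Finset.univ) => hp y)
    exact (h1.1 hs) w (Finset.mem_univ w)
  rintro ⟨l, hex, hval⟩
  cases l with
  | nil =>
    simp only [applyList] at hval
    rw [hzero x] at hval
    have : (1 : ℤ) ≤ t := by exact_mod_cast ht
    linarith
  | cons m l' =>
    have hadj := hex.1
    have h2 := hex.2.1 m.1
    have : moveFn ω m p m.1 = p m.1 - ω m.1 m.2 := by simp [moveFn]
    rw [this, hzero m.1] at h2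
    have := hω _ _ hadj
    have : (2 : ℤ) ≤ ω m.1 m.2 := by exact_mod_cast this
    linarith

end Lemmas3

section Lemmas4
variable {V : Type*} [DecidableEq V]

lemma chain_map_snd : ∀ (l : List (V × V)) (h : List.Chain' (fun a b => a.2 = b.1) l)
    (hne : l ≠ []),
    l.map Prod.snd = (l.map Prod.fst).tail ++ [(l.getLast hne).2]
  | [], _, hne => absurd rfl hne
  | [m], _, _ => by simp
  | m₁ :: m₂ :: rest, h, _ => by
    have h1 : m₁.2 = m₂.1 := List.isChain_cons_cons.1 h |>.1
    have h2 := List.isChain_cons_cons.1 h |>.2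
    have ih := chain_map_snd (m₂ :: rest) h2 (by simp)
    simp only [List.map_cons, List.tail_cons] at ih ⊢
    rw [List.getLast_cons (by simp : m₂ :: rest ≠ [])]
    rw [ih, h1]
    simp

lemma cycle_count {ω : V → V → ℕ} {l : List (V × V)}
    (hc : List.Chain' (fun a b => a.2 = b.1) l)
    (hcl : l.getLast?.map Prod.snd = l.head?.map Prod.fst)
    (hw : ∀ m ∈ l, 2 ≤ ω m.1 m.2) (w : V) :
    inC (l : Multiset (V × V)) w ≤ outC ω (l : Multiset (V × V)) w := by
  rcases eq_or_ne l [] with rfl | hne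
  · simp [inC, outC]
  · -- map snd is a rotation of map fst
    have hlast : (l.getLast hne).2 = (l.head hne).1 := by
      rw [List.getLast?_eq_getLast hne, List.head?_eq_head] at hcl
      simpa using hcl
    have hrot : l.map Prod.snd = (l.map Prod.fst).tail ++ [(l.head hne).1] := by
      rw [chain_map_snd l hc hne, hlast]
    obtain ⟨m0, l0, hl0'⟩ := List.exists_cons_of_ne_nil hne
    have hfst : l.map Prod.fst = (l.head hne).1 :: (l.map Prod.fst).tail := by
      subst hl0'; simp
    have hperm : (l.map Prod.snd).Perm (l.map Prod.fst) := by
      rw [hrot]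
      conv_rhs => rw [hfst]
      exact (List.perm_append_singleton _ _).trans (List.Perm.refl _)
    -- counts
    have hcount : ∀ (f : V × V → V),
        Multiset.card ((l : Multiset (V × V)).filter (fun m => f m = w)) =
          (l.map f : Multiset V).count w := by
      intro f
      rw [show ((l.map f : List V) : Multiset V) = (l : Multiset (V × V)).map f from by simp]
      rw [Multiset.count_map]
      congr 1
      apply Multiset.filter_congr
      intro m _
      exact ⟨fun h => h.symm, fun h => h.symm⟩
    have hin : inC (l : Multiset (V × V)) w = ((l.map Prod.snd : List V) : Multiset V).count w := by
      rw [inC, hcount Prod.snd]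
    have hcard : Multiset.card ((l : Multiset (V × V)).filter (fun m => m.1 = w))
        = ((l.map Prod.fst : List V) : Multiset V).count w := hcount Prod.fst
    have hcnt : ((l.map Prod.snd : List V) : Multiset V).count w
        = ((l.map Prod.fst : List V) : Multiset V).count w := by
      rw [Multiset.coe_eq_coe.2 hperm]
    -- out sum bounds
    have hout : (2 : ℤ) * Multiset.card ((l : Multiset (V × V)).filter (fun m => m.1 = w))
        ≤ outC ω (l : Multiset (V × V)) w := by
      rw [outC]
      have hall : ∀ z ∈ ((l : Multiset (V × V)).filter (fun m => m.1 = w)).map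
          (fun m => (ω m.1 m.2 : ℤ)), (2 : ℤ) ≤ z := by
        intro z hz
        obtain ⟨m, hm, rfl⟩ := Multiset.mem_map.1 hz
        have hm' := Multiset.mem_of_mem_filter hm
        have := hw m (by exact_mod_cast hm')
        exact_mod_cast this
      calc (2 : ℤ) * Multiset.card ((l : Multiset (V × V)).filter (fun m => m.1 = w))
          = Multiset.card (((l : Multiset (V × V)).filter (fun m => m.1 = w)).map
              (fun m => (ω m.1 m.2 : ℤ))) • (2:ℤ) := by
            simp [Multiset.card_map]; ring
        _ ≤ _ := Multiset.card_nsmul_le_sum hall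
    have hnn : (0:ℤ) ≤ Multiset.card ((l : Multiset (V × V)).filter (fun m => m.1 = w)) := by
      positivity
    rw [hin, hcnt, ← hcard]
    linarith
/-- Acyclification: remove cycles; the result pointwise dominates. -/
lemma acyclify {ω : V → V → ℕ} (p : V → ℤ) :
    ∀ (S : Multiset (V × V)), (∀ m ∈ S, 2 ≤ ω m.1 m.2) →
    ∃ S' ≤ S, Acyclic S' ∧ ∀ w, applyMS ω S p w ≤ applyMS ω S' p w := by
  intro S
  induction S using Multiset.strongInductionOn with
  | ih S ih =>
    intro hw
    by_cases hA : Acyclic S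
    · exact ⟨S, le_refl S, hA, fun w => le_refl _⟩
    · have hcyc : HasCycle S := not_not.1 hA
      obtain ⟨l, hne, hle, hch, hcl⟩ := hcyc
      have hl0 : (l : Multiset (V × V)) ≠ 0 := by
        simpa using hne
      have hS0 : S ≠ 0 := by
        rintro rfl
        exact hl0 (Multiset.le_zero.1 hle)
      have hcard : Multiset.card (S - (l : Multiset (V × V))) < Multiset.card S := by
        rw [Multiset.card_sub hle]
        have h1 : 0 < Multiset.card (l : Multiset (V × V)) :=
          Multiset.card_pos.2 hl0
        have h2 := Multiset.card_le_card hle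
        omega
      have hlt : S - (l : Multiset (V × V)) < S :=
        lt_of_le_of_ne tsub_le_self (fun h => by rw [h] at hcard; exact lt_irrefl _ hcard)
      have hsub : S - (l : Multiset (V × V)) ≤ S := tsub_le_self
      have hw' : ∀ m ∈ S - (l : Multiset (V × V)), 2 ≤ ω m.1 m.2 :=
        fun m hm => hw m (Multiset.mem_of_le hsub hm)
      obtain ⟨S', hle', hA', hmono⟩ := ih (S - (l : Multiset (V × V))) hlt hw'
      refine ⟨S', le_trans hle' hsub, hA', fun w => le_trans ?_ (hmono w)⟩
      have hwl : ∀ m ∈ l, 2 ≤ ω m.1 m.2 := fun m hm =>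
        hw m (Multiset.mem_of_le hle (by exact_mod_cast hm))
      have hcc := cycle_count (ω := ω) hch hcl hwl w
      obtain ⟨T, hTeq, hT⟩ : ∃ T, T = S - (l : Multiset (V × V)) ∧ S = T + (l : Multiset (V × V)) :=
        ⟨S - (l : Multiset (V × V)), rfl, (tsub_add_cancel_of_le hle).symm⟩
      rw [← hTeq]
      conv_lhs => rw [hT]
      rw [applyMS_def, applyMS_def, inC_add, outC_add]
      linarith

end Lemmas4

section Lemmas5
variable {V : Type*} [DecidableEq V]

lemma acyclic_mono {S T : Multiset (V × V)} (hle : T ≤ S) (hA : Acyclic S) : Acyclic T := by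
  rintro ⟨l, h1, h2, h3, h4⟩
  exact hA ⟨l, h1, le_trans h2 hle, h3, h4⟩

lemma exists_initial {S : Multiset (V × V)} (hS : S ≠ 0) (hA : Acyclic S) :
    ∃ m ∈ S, ∀ m' ∈ S, m'.2 ≠ m.1 := by
  classical
  set P : ℕ → Prop := fun n => ∃ l : List (V × V), l.length = n ∧ l ≠ [] ∧
    (l : Multiset (V × V)) ≤ S ∧ List.Chain' (fun a b => a.2 = b.1) l with hP
  obtain ⟨m0, hm0⟩ := Multiset.exists_mem_of_ne_zero hS
  have hP1 : P 1 := ⟨[m0], rfl, by simp, by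
    rw [show (([m0] : List (V × V)) : Multiset (V × V)) = {m0} from rfl]
    exact Multiset.singleton_le.2 hm0, List.isChain_singleton m0⟩
  have h1le : 1 ≤ Multiset.card S := Multiset.card_pos.2 hS
  set n₀ := Nat.findGreatest P (Multiset.card S) with hn₀
  have hPn : P n₀ := Nat.findGreatest_spec h1le hP1
  obtain ⟨l, hlen, hne, hle, hch⟩ := hPn
  set m := l.head hne with hm
  have hmem : m ∈ S := Multiset.mem_of_le hle (by exact_mod_cast List.head_mem hne)
  refine ⟨m, hmem, ?_⟩
  intro m' hm' heq
  by_cases hcase : (m' ::ₘ (l : Multiset (V × V))) ≤ S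
  · have hPn1 : P (n₀ + 1) := by
      refine ⟨m' :: l, by simp [hlen], by simp, hcase, ?_⟩
      apply List.IsChain.cons hch
      intro y hy
      rw [List.head?_eq_head hne] at hy
      cases hy
      exact heq
    have hcard : n₀ + 1 ≤ Multiset.card S := by
      have := Multiset.card_le_card hcase
      simpa [hlen] using this
    exact Nat.findGreatest_is_greatest (Nat.lt_succ_self n₀) hcard hPn1
  · have hcnt : Multiset.count m' S ≤ Multiset.count m' (l : Multiset (V × V)) := by
      by_contra h
      push_neg at h
      apply hcase
      rw [Multiset.le_iff_count]
      intro b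
      rw [Multiset.count_cons]
      by_cases hb : b = m'
      · subst hb
        simpa using h
      · simp only [hb, if_false, add_zero]
        exact Multiset.le_iff_count.1 hle b
    have hml : m' ∈ l := by
      have h1 : 1 ≤ Multiset.count m' S := Multiset.count_pos.2 hm'
      have h2 : 0 < Multiset.count m' (l : Multiset (V × V)) := by omega
      exact_mod_cast Multiset.count_pos.1 h2
    obtain ⟨c, d, hcd⟩ := List.append_of_mem hml
    apply hA
    refine ⟨c ++ [m'], by simp, ?_, ?_, ?_⟩
    · have hsub : List.Sublist (c ++ [m']) l := by
        rw [hcd, show c ++ m' :: d = (c ++ [m']) ++ d by simp]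
        exact List.sublist_append_left _ _
      exact le_trans (Multiset.coe_le.2 hsub.subperm) hle
    · have : List.Chain' (fun a b : V × V => a.2 = b.1) ((c ++ [m']) ++ d) := by
        rwa [show (c ++ [m']) ++ d = c ++ m' :: d by simp, ← hcd]
      exact (List.isChain_append.1 this).1
    · rw [List.getLast?_concat]
      have hhd : (c ++ [m']).head? = l.head? := by
        rw [hcd]
        cases c <;> simp
      rw [hhd, List.head?_eq_head hne]
      simp [heq, hm]

lemma order_acyclic {G : SimpleGraph V} {ω : V → V → ℕ} :
    ∀ (S : Multiset (V × V)), (∀ m ∈ S, G.Adj m.1 m.2) → Acyclic S →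
    ∀ p : V → ℤ, IsDistrib p → (∀ w, 0 ≤ applyMS ω S p w) →
    ∃ l : List (V × V), (l : Multiset (V × V)) = S ∧ Executable G ω p l := by
  intro S
  induction S using Multiset.strongInductionOn with
  | ih S ih =>
    intro hadjS hA p hp hnn
    by_cases hS0 : S = 0
    · exact ⟨[], by simp [hS0], trivial⟩
    · obtain ⟨m, hm, hinit⟩ := exists_initial hS0 hA
      have hadj : G.Adj m.1 m.2 := hadjS m hm
      have hne12 : m.1 ≠ m.2 := G.ne_of_adj hadj
      have hcons : m ::ₘ S.erase m = S := Multiset.cons_erase hm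
      have hkey : applyMS ω (S.erase m) (moveFn ω m p) = applyMS ω S p := by
        rw [← applyMS_cons ω m _ p hne12, hcons]
      -- p m.1 is at least the out-weight of S at m.1
      have hin0 : inC S m.1 = 0 := inC_eq_zero S m.1 hinit
      have hout : outC ω S m.1 = outC ω (S.erase m) m.1 + ω m.1 m.2 := by
        conv_lhs => rw [← hcons]
        rw [outC_cons, if_pos rfl]
      have hp1 : outC ω (S.erase m) m.1 + (ω m.1 m.2 : ℤ) ≤ p m.1 := by
        have := hnn m.1
        rw [applyMS_def, hin0, hout] at this
        linarith
      have hnnmv : ∀ w, 0 ≤ moveFn ω m p w := by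
        intro w
        unfold moveFn
        split_ifs with h1 h2
        · have := outC_nonneg ω (S.erase m) m.1
          linarith
        · linarith [hp w, hp m.2]
        · exact hp w
      have hdmv : IsDistrib (moveFn ω m p) := hnnmv
      have hadj' : ∀ m' ∈ S.erase m, G.Adj m'.1 m'.2 :=
        fun m' hm' => hadjS m' (Multiset.mem_of_le (Multiset.erase_le m S) hm')
      have hA' : Acyclic (S.erase m) := acyclic_mono (Multiset.erase_le m S) hA
      have hnn' : ∀ w, 0 ≤ applyMS ω (S.erase m) (moveFn ω m p) w := by
        intro w; rw [hkey]; exact hnn w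
      obtain ⟨l', hl'eq, hl'ex⟩ := ih (S.erase m) (Multiset.erase_lt.2 hm) hadj' hA'
        (moveFn ω m p) hdmv hnn'
      refine ⟨m :: l', ?_, hadj, hnnmv, hl'ex⟩
      rw [show ((m :: l' : List (V × V)) : Multiset (V × V)) = m ::ₘ (l' : Multiset (V × V))
        from rfl, hl'eq, hcons]

/-- From a good multiset of moves to reachability. -/
lemma ms_reaches {G : SimpleGraph V} {ω : V → V → ℕ}
    (hωa : ∀ u w : V, G.Adj u w → 2 ≤ ω u w) {p : V → ℤ} {x : V} {t : ℕ}
    (hp : IsDistrib p) (S : Multiset (V × V)) (hadj : ∀ m ∈ S, G.Adj m.1 m.2)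
    (hnn : ∀ w, 0 ≤ applyMS ω S p w) (hval : (t : ℤ) ≤ applyMS ω S p x) :
    Reaches G ω p x t := by
  obtain ⟨S', hle, hA, hmono⟩ := acyclify p S (fun m hm => hωa _ _ (hadj m hm))
  have hadj' : ∀ m ∈ S', G.Adj m.1 m.2 := fun m hm => hadj m (Multiset.mem_of_le hle hm)
  have hnn' : ∀ w, 0 ≤ applyMS ω S' p w := fun w => le_trans (hnn w) (hmono w)
  obtain ⟨l, hleq, hlex⟩ := order_acyclic S' hadj' hA p hp hnn'
  refine ⟨l, hlex, ?_⟩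
  rw [applyList_eq_applyMS G ω l p (fun m hm => G.ne_of_adj (hadj' m (hleq ▸ (by exact_mod_cast hm))))]
  rw [hleq]
  exact le_trans (le_trans hval (hmono x)) (le_refl _)

/-- From reachability to a good multiset of moves. -/
lemma reaches_ms {G : SimpleGraph V} {ω : V → V → ℕ} {p : V → ℤ} {x : V} {t : ℕ}
    (hp : IsDistrib p) (h : Reaches G ω p x t) :
    ∃ S : Multiset (V × V), (∀ m ∈ S, G.Adj m.1 m.2) ∧
      (∀ w, 0 ≤ applyMS ω S p w) ∧ (t : ℤ) ≤ applyMS ω S p x := by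
  obtain ⟨l, hex, hval⟩ := h
  have hadj := exec_adj hex
  have hne : ∀ m ∈ l, m.1 ≠ m.2 := fun m hm => G.ne_of_adj (hadj m hm)
  have heq := applyList_eq_applyMS G ω l p hne
  refine ⟨(l : Multiset (V × V)), fun m hm => hadj m (by exact_mod_cast hm), ?_, ?_⟩
  · intro w
    rw [← heq]
    exact exec_nonneg hex hp w
  · rwa [← heq]

end Lemmas5

section Lemmas6
variable {V : Type*} [DecidableEq V] {W : Type*} [DecidableEq W]

lemma inC_map (f : W → V) (S : Multiset (W × W)) (w : V) :
    inC (S.map (Prod.map f f)) w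
      = (Multiset.card (S.filter (fun m => f m.2 = w)) : ℤ) := by
  unfold inC
  rw [Multiset.filter_map]
  rw [Multiset.card_map]
  rfl

lemma outC_map (ω' : V → V → ℕ) (f : W → V) (S : Multiset (W × W)) (w : V) :
    outC ω' (S.map (Prod.map f f)) w
      = ((S.filter (fun m => f m.1 = w)).map (fun m => (ω' (f m.1) (f m.2) : ℤ))).sum := by
  unfold outC
  rw [Multiset.filter_map, Multiset.map_map]
  rfl

lemma sum_map_const_eq {S : Multiset W} {f : W → ℤ} {c : ℤ}
    (h : ∀ m ∈ S, f m = c) : (S.map f).sum = (Multiset.card S : ℤ) * c := by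
  rw [Multiset.map_congr rfl h]
  simp [Multiset.map_const', mul_comm]

lemma inC_replicate (k : ℕ) (e : V × V) (w : V) :
    inC (Multiset.replicate k e) w = if e.2 = w then (k : ℤ) else 0 := by
  unfold inC
  by_cases h : e.2 = w
  · rw [if_pos h, Multiset.filter_eq_self.2 (fun m hm => by
      rw [Multiset.eq_of_mem_replicate hm]; exact h)]
    simp
  · rw [if_neg h, Multiset.filter_eq_nil.2 (fun m hm hc => by
      rw [Multiset.eq_of_mem_replicate hm] at hc; exact h hc)]
    simp

lemma outC_replicate (ω' : V → V → ℕ) (k : ℕ) (e : V × V) (w : V) :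
    outC ω' (Multiset.replicate k e) w = if e.1 = w then (k : ℤ) * ω' e.1 e.2 else 0 := by
  unfold outC
  by_cases h : e.1 = w
  · rw [if_pos h, Multiset.filter_eq_self.2 (fun m hm => by
      rw [Multiset.eq_of_mem_replicate hm]; exact h)]
    rw [Multiset.map_replicate, Multiset.sum_replicate]
    simp [mul_comm]
  · rw [if_neg h, Multiset.filter_eq_nil.2 (fun m hm hc => by
      rw [Multiset.eq_of_mem_replicate hm] at hc; exact h hc)]
    simp

end Lemmas6

section Main
variable {V : Type*} [Fintype V] [DecidableEq V]

lemma sum_ne_inr {A : Set V} (z : ↥A ⊕ Unit) (h : z ≠ Sum.inr ()) : ∃ c : ↥A, z = Sum.inl c := by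
  cases z with
  | inl c => exact ⟨c, rfl⟩
  | inr u => cases u; exact absurd rfl h

lemma main1
    (G : SimpleGraph V)
    (A B : Set V) (v : V)
    (hUnion : A ∪ B = Set.univ) (hInter : A ∩ B = {v})
    (hvA : v ∈ A) (hvB : v ∈ B)
    (hedges : ∀ u w : V, G.Adj u w → (u ∈ A ∧ w ∈ A) ∨ (u ∈ B ∧ w ∈ B))
    (ω : V → V → ℕ)
    (hω : ∀ u w : V, G.Adj u w → 2 ≤ ω u w)
    (a b : ℕ) (ha : 2 ≤ a)
    (hpi : ∀ t : ℕ, 1 ≤ t →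
      piT (G.induce B) (fun c d => ω c.1 d.1) ⟨v, hvB⟩ t = a * t + b)
    (x : V) (hx : x ∈ A) (m : ℕ)
    (hm : ∀ pb : (↥A ⊕ Unit) → ℤ, IsDistrib pb → size pb = (m : ℤ) →
      Reaches (attachPendant G A v) (attachWeight ω A a) pb (Sum.inl ⟨x, hx⟩) 1) :
    ∀ p : V → ℤ, IsDistrib p → size p = ((m + b : ℕ) : ℤ) → Reaches G ω p x 1 := by
  intro p hp hs
  have hBv : ∀ w : V, w ∈ A → w ∈ B → w = v := by
    intro w h1 h2
    have : w ∈ A ∩ B := ⟨h1, h2⟩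
    rwa [hInter] at this
  have hnA : ∀ w : V, w ∉ A → w ∈ B := by
    intro w h1
    have h2 : w ∈ A ∪ B := by rw [hUnion]; trivial
    exact ((Set.mem_union _ _ _).1 h2).resolve_left h1
  set ME := attachPendant G A v with hME
  set ωT := attachWeight ω A a with hωT
  set ωB := (fun c d : ↥B => ω c.1 d.1) with hωB
  -- the amount of pebbles outside A
  set s : ℤ := ∑ w ∈ Finset.univ.filter (fun w => w ∉ A), p w with hsdef
  have hs0 : 0 ≤ s := Finset.sum_nonneg (fun w _ => hp w)
  set sN : ℕ := s.toNat with hsNdef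
  have hsNs : (sN : ℤ) = s := Int.toNat_of_nonneg hs0
  set r : ℕ := sN - b with hrdef
  set tstar : ℕ := r / a with htdef
  -- the distribution on the pendant graph
  set pt : (↥A ⊕ Unit) → ℤ := Sum.elim (fun a' => p a'.1) (fun _ => (r : ℤ)) with hptdef
  have hptd : IsDistrib pt := by
    rintro (c | u)
    · exact hp c.1
    · exact Int.natCast_nonneg r
  have hsplit : size p = (∑ w ∈ Finset.univ.filter (fun w => w ∈ A), p w) + s := by
    rw [hsdef]
    exact (Finset.sum_filter_add_sum_filter_not Finset.univ _ p).symm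
  have hsumA : ∑ c : ↥A, p c.1 = ∑ w ∈ Finset.univ.filter (fun w => w ∈ A), p w :=
    (Finset.sum_subtype _ (by simp) (fun w => p w)).symm
  have hsizept : size pt = (∑ w ∈ Finset.univ.filter (fun w => w ∈ A), p w) + r := by
    unfold size
    rw [Fintype.sum_sum_type]
    simp only [hptdef, Sum.elim_inl, Sum.elim_inr]
    rw [hsumA]
    simp
  have hge : (m : ℤ) ≤ size pt := by
    rw [hsizept]
    have h1 : (r : ℤ) ≥ s - b := by
      rw [← hsNs, hrdef]
      push_cast
      omega
    push_cast at hs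
    linarith [hsplit.symm.trans hs]
  have hreach : Reaches ME ωT pt (Sum.inl ⟨x, hx⟩) 1 := reaches_of_mem hm hptd hge
  obtain ⟨St, hStadj, hStnn, hStval⟩ := reaches_ms hptd hreach
  set k1 : ℕ := Multiset.card (St.filter (fun m' => m'.1 = Sum.inr ())) with hk1
  set k2 : ℕ := Multiset.card (St.filter (fun m' => m'.2 = Sum.inr ())) with hk2
  have hinr1 : ∀ m' ∈ St, m'.1 = Sum.inr () → m'.2 = Sum.inl ⟨v, hvA⟩ := by
    intro m' hm' h1
    have hadj := hStadj m' hm'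
    rw [h1] at hadj
    cases hmm : m'.2 with
    | inl c =>
      rw [hmm] at hadj
      have : (c : V) = v := hadj
      rw [show (⟨v, hvA⟩ : ↥A) = c from (Subtype.ext this).symm]
    | inr u =>
      rw [hmm] at hadj
      exact absurd hadj (by simp [hME, attachPendant])
  have hinr2 : ∀ m' ∈ St, m'.2 = Sum.inr () → m'.1 = Sum.inl ⟨v, hvA⟩ := by
    intro m' hm' h1
    have hadj := hStadj m' hm'
    rw [h1] at hadj
    cases hmm : m'.1 with
    | inl c =>
      rw [hmm] at hadj
      have : (c : V) = v := hadj
      rw [show (⟨v, hvA⟩ : ↥A) = c from (Subtype.ext this).symm]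
    | inr u =>
      rw [hmm] at hadj
      exact absurd hadj (by simp [hME, attachPendant])
  -- balance at the pendant vertex u
  have hbalu : (a : ℤ) * k1 ≤ (r : ℤ) + k2 := by
    have h := hStnn (Sum.inr ())
    rw [applyMS_def] at h
    have hin : inC St (Sum.inr ()) = (k2 : ℤ) := by rw [hk2]; rfl
    have hconst : ∀ m' ∈ St.filter (fun m' => m'.1 = Sum.inr ()),
        ((ωT m'.1 m'.2 : ℕ) : ℤ) = (a : ℤ) := by
      intro m' hm'
      have h1 := Multiset.of_mem_filter hm'
      have h2 := Multiset.mem_of_mem_filter hm'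
      have h3 := hinr1 m' h2 h1
      rw [h1, h3]
      rfl
    have hout : outC ωT St (Sum.inr ()) = (a : ℤ) * k1 := by
      unfold outC
      rw [sum_map_const_eq hconst, hk1]
      ring
    have hptu : pt (Sum.inr ()) = (r : ℤ) := rfl
    rw [hin, hout, hptu] at h
    linarith
  have hk1le : k1 ≤ tstar + a * k2 := by
    have h0 : 0 < a := by omega
    have hd1 : a * tstar ≤ r := by
      rw [htdef, mul_comm]
      exact Nat.div_mul_le_self r a
    have hd2 : r < a * tstar + a := by
      rw [htdef]
      conv_lhs => rw [← Nat.div_add_mod r a]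
      exact Nat.add_lt_add_left (Nat.mod_lt r h0) _
    have hk1a : a * k1 ≤ r + k2 := by exact_mod_cast hbalu
    have e2 : k2 ≤ a * a * k2 := Nat.le_mul_of_pos_left k2 (by positivity)
    have hstep : a * k1 < a * (tstar + a * k2 + 1) := by
      calc a * k1 ≤ r + k2 := hk1a
        _ < (a * tstar + a) + k2 := Nat.add_lt_add_right hd2 k2
        _ ≤ (a * tstar + a) + a * a * k2 := Nat.add_le_add_left e2 _
        _ = a * (tstar + a * k2 + 1) := by ring
    have := Nat.lt_of_mul_lt_mul_left hstep
    omega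
  -- the restriction of p to B minus v
  set q : ↥B → ℤ := fun c => if (c : V) = v then 0 else p c.1 with hqdef
  have hqd : IsDistrib q := by
    intro c
    rw [hqdef]
    dsimp only
    split_ifs
    · exact le_refl 0
    · exact hp c.1
  have hqsize : size q = s := by
    have h1 : ∑ w ∈ Finset.univ.filter (fun w => w ∈ B), (if w = v then 0 else p w)
        = size q := by
      rw [Finset.sum_subtype (p := fun w => w ∈ B) _ (by simp) (fun w => if w = v then 0 else p w)]
      rfl
    have h2 : ∑ w ∈ Finset.univ.filter (fun w => w ∉ A), p w
        = ∑ w ∈ Finset.univ.filter (fun w => w ∈ B), (if w = v then 0 else p w) := by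
      apply Finset.sum_subset_zero_on_sdiff
      · intro w hw
        simp only [Finset.mem_filter, Finset.mem_univ, true_and] at hw ⊢
        exact hnA w hw
      · intro w hw
        simp only [Finset.mem_sdiff, Finset.mem_filter, Finset.mem_univ, true_and] at hw
        have hwA : w ∈ A := by tauto
        rw [if_pos (hBv w hwA hw.1)]
      · intro w hw
        simp only [Finset.mem_filter, Finset.mem_univ, true_and] at hw
        rw [if_neg (show w ≠ v from fun hc => hw (by rw [hc]; exact hvA))]
    rw [← h1, ← h2, hsdef]
  -- extract tstar pebbles to v inside K
  have hSK : ∃ SK : Multiset (↥B × ↥B), (∀ m' ∈ SK, (G.induce B).Adj m'.1 m'.2) ∧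
      (∀ w, 0 ≤ applyMS ωB SK q w) ∧ (tstar : ℤ) ≤ applyMS ωB SK q ⟨v, hvB⟩ := by
    rcases Nat.eq_zero_or_pos tstar with h0 | hpos
    · refine ⟨0, by simp, fun w => by rw [applyMS_zero]; exact hqd w, ?_⟩
      rw [applyMS_zero, h0]
      exact le_trans (by norm_num) (hqd ⟨v, hvB⟩)
    · have hset : {mK : ℕ | ∀ pK : ↥B → ℤ, IsDistrib pK → size pK = (mK : ℤ) →
          Reaches (G.induce B) ωB pK ⟨v, hvB⟩ tstar}.Nonempty := by
        by_contra hc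
        rw [Set.not_nonempty_iff_eq_empty] at hc
        have h2 := hpi tstar hpos
        unfold piT at h2
        rw [hc, Nat.sInf_empty] at h2
        have h3 : 2 * 1 ≤ a * tstar := Nat.mul_le_mul ha hpos
        omega
      have hmem := Nat.sInf_mem hset
      have hmem2 : piT (G.induce B) ωB ⟨v, hvB⟩ tstar ∈ {mK : ℕ | ∀ pK : ↥B → ℤ,
          IsDistrib pK → size pK = (mK : ℤ) → Reaches (G.induce B) ωB pK ⟨v, hvB⟩ tstar} := hmem
      rw [hpi tstar hpos] at hmem2
      have hd1 : a * tstar ≤ r := by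
        rw [htdef, mul_comm]
        exact Nat.div_mul_le_self r a
      have ha1 : a ≤ a * tstar := Nat.le_mul_of_pos_right a hpos
      have hnat : a * tstar + b ≤ sN := by
        have hrr : r = sN - b := hrdef
        generalize hYY : a * tstar = Y at hd1 ha1 ⊢
        omega
      have hqge : ((a * tstar + b : ℕ) : ℤ) ≤ size q := by
        rw [hqsize, ← hsNs]
        exact_mod_cast hnat
      have hreachK : Reaches (G.induce B) ωB q ⟨v, hvB⟩ tstar :=
        reaches_of_mem hmem2 hqd hqge
      exact reaches_ms hqd hreachK
  obtain ⟨SK, hSKadj, hSKnn, hSKval⟩ := hSK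
  -- assemble the move multiset on G
  set ψ : ↥A ⊕ Unit → V := Sum.elim Subtype.val (fun _ => v) with hψdef
  have hψA : ∀ z : ↥A ⊕ Unit, ψ z ∈ A := by
    rintro (c | u)
    · exact c.2
    · exact hvA
  set Pa : (↥A ⊕ Unit) × (↥A ⊕ Unit) → Prop :=
    fun m' => m'.1 ≠ Sum.inr () ∧ m'.2 ≠ Sum.inr () with hPadef
  set SA : Multiset (V × V) := (St.filter Pa).map (Prod.map ψ ψ) with hSAdef
  set SKv : Multiset (V × V) := SK.map (Prod.map Subtype.val Subtype.val) with hSKvdef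
  have hSA_notA : ∀ w : V, w ∉ A → inC SA w = 0 ∧ outC ω SA w = 0 := by
    intro w hw
    constructor
    · rw [hSAdef, inC_map]
      have hnil := Multiset.filter_eq_nil.2 (by intro m' _ hc; exact hw (hc ▸ hψA m'.2) :
        ∀ m' ∈ St.filter Pa, ¬(ψ m'.2 = w))
      rw [hnil]
      simp
    · rw [hSAdef, outC_map]
      have hnil := Multiset.filter_eq_nil.2 (by intro m' _ hc; exact hw (hc ▸ hψA m'.1) :
        ∀ m' ∈ St.filter Pa, ¬(ψ m'.1 = w))
      rw [hnil]
      simp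
  have hSKv_notB : ∀ w : V, w ∉ B → inC SKv w = 0 ∧ outC ω SKv w = 0 := by
    intro w hw
    constructor
    · rw [hSKvdef, inC_map]
      have hnil := Multiset.filter_eq_nil.2 (by intro m' _ hc; exact hw (hc ▸ m'.2.2) :
        ∀ m' ∈ SK, ¬((m'.2 : V) = w))
      rw [hnil]
      simp
    · rw [hSKvdef, outC_map]
      have hnil := Multiset.filter_eq_nil.2 (by intro m' _ hc; exact hw (hc ▸ m'.1.2) :
        ∀ m' ∈ SK, ¬((m'.1 : V) = w))
      rw [hnil]
      simp
  have hSKv_eq : ∀ (w : V) (hw : w ∈ B),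
      inC SKv w = inC SK (⟨w, hw⟩ : ↥B) ∧ outC ω SKv w = outC ωB SK ⟨w, hw⟩ := by
    intro w hw
    have hfil2 : SK.filter (fun m' => (m'.2 : V) = w) = SK.filter (fun m' => m'.2 = ⟨w, hw⟩) :=
      Multiset.filter_congr (fun m' _ => ⟨fun h => Subtype.ext h, fun h => by rw [h]⟩)
    have hfil1 : SK.filter (fun m' => (m'.1 : V) = w) = SK.filter (fun m' => m'.1 = ⟨w, hw⟩) :=
      Multiset.filter_congr (fun m' _ => ⟨fun h => Subtype.ext h, fun h => by rw [h]⟩)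
    constructor
    · rw [hSKvdef, inC_map, hfil2]; rfl
    · rw [hSKvdef, outC_map, hfil1]; rfl
  have hSA_eqA : ∀ (w : V) (hw : w ∈ A), w ≠ v →
      inC SA w = inC St (Sum.inl ⟨w, hw⟩) ∧ outC ω SA w = outC ωT St (Sum.inl ⟨w, hw⟩) := by
    intro w hw hwv
    have hfil2 : (St.filter Pa).filter (fun m' => ψ m'.2 = w)
        = St.filter (fun m' => m'.2 = Sum.inl ⟨w, hw⟩) := by
      rw [Multiset.filter_filter]
      apply Multiset.filter_congr
      intro m' hm'
      constructor
      · rintro ⟨h3, h1, h2⟩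
        obtain ⟨c, hc⟩ := sum_ne_inr m'.2 h2
        rw [hc] at h3 ⊢
        exact congrArg Sum.inl (Subtype.ext h3)
      · intro h
        have h2 : m'.2 ≠ Sum.inr () := by rw [h]; simp
        have h1 : m'.1 ≠ Sum.inr () := by
          intro hc
          have h4 := hinr1 m' hm' hc
          rw [h4] at h
          have h5 : (⟨v, hvA⟩ : ↥A) = ⟨w, hw⟩ := Sum.inl.inj h
          exact hwv (Subtype.ext_iff.1 h5).symm
        refine ⟨?_, h1, h2⟩
        rw [h]
        rfl
    have hfil1 : (St.filter Pa).filter (fun m' => ψ m'.1 = w)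
        = St.filter (fun m' => m'.1 = Sum.inl ⟨w, hw⟩) := by
      rw [Multiset.filter_filter]
      apply Multiset.filter_congr
      intro m' hm'
      constructor
      · rintro ⟨h3, h1, h2⟩
        obtain ⟨c, hc⟩ := sum_ne_inr m'.1 h1
        rw [hc] at h3 ⊢
        exact congrArg Sum.inl (Subtype.ext h3)
      · intro h
        have h1 : m'.1 ≠ Sum.inr () := by rw [h]; simp
        have h2 : m'.2 ≠ Sum.inr () := by
          intro hc
          have h4 := hinr2 m' hm' hc
          rw [h4] at h
          have h5 : (⟨v, hvA⟩ : ↥A) = ⟨w, hw⟩ := Sum.inl.inj h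
          exact hwv (Subtype.ext_iff.1 h5).symm
        refine ⟨?_, h1, h2⟩
        rw [h]
        rfl
    constructor
    · rw [hSAdef, inC_map, hfil2]
      rfl
    · rw [hSAdef, outC_map, hfil1]
      unfold outC
      apply congrArg Multiset.sum
      apply Multiset.map_congr rfl
      intro m' hm'
      have hmSt := Multiset.mem_of_mem_filter hm'
      have hm1 : m'.1 = Sum.inl ⟨w, hw⟩ := (Multiset.mem_filter.1 hm').2
      have h2 : m'.2 ≠ Sum.inr () := by
        intro hc
        have h4 := hinr2 m' hmSt hc
        rw [h4] at hm1
        have h5 : (⟨v, hvA⟩ : ↥A) = ⟨w, hw⟩ := Sum.inl.inj hm1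
        exact hwv (Subtype.ext_iff.1 h5).symm
      obtain ⟨d, hd⟩ := sum_ne_inr m'.2 h2
      rw [hm1, hd]
      rfl
  -- counts of SA at v
  have hSA_v : inC SA v = inC St (Sum.inl ⟨v, hvA⟩) - k1 ∧
      outC ω SA v = outC ωT St (Sum.inl ⟨v, hvA⟩) - (a : ℤ) * k2 := by
    constructor
    · have hsplit2 : St.filter (fun m' => m'.2 = Sum.inl ⟨v, hvA⟩)
          = St.filter (fun m' => m'.1 = Sum.inr ())
            + (St.filter Pa).filter (fun m' => ψ m'.2 = v) := by
        have e1 : (St.filter (fun m' => m'.2 = Sum.inl ⟨v, hvA⟩)).filter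
            (fun m' => m'.1 = Sum.inr ()) = St.filter (fun m' => m'.1 = Sum.inr ()) := by
          rw [Multiset.filter_filter]
          apply Multiset.filter_congr
          intro m' hm'
          constructor
          · rintro ⟨h1, _⟩; exact h1
          · intro h1; exact ⟨h1, hinr1 m' hm' h1⟩
        have e2 : (St.filter (fun m' => m'.2 = Sum.inl ⟨v, hvA⟩)).filter
            (fun m' => ¬(m'.1 = Sum.inr ())) = (St.filter Pa).filter (fun m' => ψ m'.2 = v) := by
          rw [Multiset.filter_filter, Multiset.filter_filter]
          apply Multiset.filter_congr
          intro m' hm'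
          constructor
          · rintro ⟨h1, h2⟩
            refine ⟨by rw [h2]; rfl, h1, by rw [h2]; simp⟩
          · rintro ⟨h3, h1, h2⟩
            obtain ⟨c, hc⟩ := sum_ne_inr m'.2 h2
            rw [hc] at h3 ⊢
            exact ⟨h1, congrArg Sum.inl (Subtype.ext h3)⟩
        rw [← e1, ← e2]
        rw [Multiset.filter_add_not]
      rw [hSAdef, inC_map]
      unfold inC
      rw [hsplit2, Multiset.card_add, hk1]
      push_cast
      ring
    · have hsplit1 : St.filter (fun m' => m'.1 = Sum.inl ⟨v, hvA⟩)
          = St.filter (fun m' => m'.2 = Sum.inr ())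
            + (St.filter Pa).filter (fun m' => ψ m'.1 = v) := by
        have e1 : (St.filter (fun m' => m'.1 = Sum.inl ⟨v, hvA⟩)).filter
            (fun m' => m'.2 = Sum.inr ()) = St.filter (fun m' => m'.2 = Sum.inr ()) := by
          rw [Multiset.filter_filter]
          apply Multiset.filter_congr
          intro m' hm'
          constructor
          · rintro ⟨h1, _⟩; exact h1
          · intro h1; exact ⟨h1, hinr2 m' hm' h1⟩
        have e2 : (St.filter (fun m' => m'.1 = Sum.inl ⟨v, hvA⟩)).filter
            (fun m' => ¬(m'.2 = Sum.inr ())) = (St.filter Pa).filter (fun m' => ψ m'.1 = v) := by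
          rw [Multiset.filter_filter, Multiset.filter_filter]
          apply Multiset.filter_congr
          intro m' hm'
          constructor
          · rintro ⟨h1, h2⟩
            refine ⟨by rw [h2]; rfl, by rw [h2]; simp, h1⟩
          · rintro ⟨h3, h1, h2⟩
            obtain ⟨c, hc⟩ := sum_ne_inr m'.1 h1
            rw [hc] at h3 ⊢
            exact ⟨h2, congrArg Sum.inl (Subtype.ext h3)⟩
        rw [← e1, ← e2]
        rw [Multiset.filter_add_not]
      have hsum1 : outC ωT St (Sum.inl ⟨v, hvA⟩)
          = (a : ℤ) * k2 + outC ω SA v := by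
        rw [hSAdef, outC_map]
        unfold outC
        rw [hsplit1, Multiset.map_add, Multiset.sum_add]
        congr 1
        · rw [sum_map_const_eq (c := (a : ℤ)) ?_, hk2]
          · ring
          · intro m' hm'
            have h1 := Multiset.of_mem_filter hm'
            have h2 := Multiset.mem_of_mem_filter hm'
            have h3 := hinr2 m' h2 h1
            rw [h1, h3]
            rfl
        · apply congrArg Multiset.sum
          apply Multiset.map_congr rfl
          intro m' hm'
          have hP : Pa m' := (Multiset.mem_filter.1 (Multiset.mem_of_mem_filter hm')).2
          obtain ⟨c, hc⟩ := sum_ne_inr m'.1 hP.1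
          obtain ⟨d, hd⟩ := sum_ne_inr m'.2 hP.2
          rw [hc, hd]
          rfl
      linarith [hsum1]
  -- the combined multiset
  set S : Multiset (V × V) := SA + SKv with hSdef
  have hSadj : ∀ m' ∈ S, G.Adj m'.1 m'.2 := by
    intro m' hm'
    rcases Multiset.mem_add.1 hm' with h | h
    · obtain ⟨n, hn, rfl⟩ := Multiset.mem_map.1 h
      have hnSt := Multiset.mem_of_mem_filter hn
      have hP : Pa n := Multiset.of_mem_filter hn
      obtain ⟨c, hc⟩ := sum_ne_inr n.1 hP.1
      obtain ⟨d, hd⟩ := sum_ne_inr n.2 hP.2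
      have hadj := hStadj n hnSt
      rw [hc, hd] at hadj
      show G.Adj (ψ n.1) (ψ n.2)
      rw [hc, hd]
      exact hadj
    · obtain ⟨n, hn, rfl⟩ := Multiset.mem_map.1 h
      exact hSKadj n hn
  -- accounting at each vertex
  have hq_off : ∀ (w : V) (hw : w ∈ B), w ≠ v → q ⟨w, hw⟩ = p w := by
    intro w hw hwv
    rw [hqdef]
    exact if_neg hwv
  have hqv : q ⟨v, hvB⟩ = 0 := by rw [hqdef]; exact if_pos rfl
  have happly : ∀ w : V,
      applyMS ω S p w = p w + inC SA w + inC SKv w - outC ω SA w - outC ω SKv w := by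
    intro w
    rw [hSdef, applyMS_def, inC_add, outC_add]
    ring
  have hcaseB : ∀ (w : V) (hw : w ∉ A),
      applyMS ω S p w = applyMS ωB SK q ⟨w, hnA w hw⟩ := by
    intro w hw
    have hwB := hnA w hw
    have hwv : w ≠ v := fun hc => hw (by rw [hc]; exact hvA)
    obtain ⟨hin0, hout0⟩ := hSA_notA w hw
    obtain ⟨hin, hout⟩ := hSKv_eq w hwB
    rw [happly w, hin0, hout0, hin, hout, applyMS_def, hq_off w hwB hwv]
    ring
  have hcaseA : ∀ (w : V) (hw : w ∈ A), w ≠ v →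
      applyMS ω S p w = applyMS ωT St pt (Sum.inl ⟨w, hw⟩) := by
    intro w hw hwv
    have hwB : w ∉ B := fun hc => hwv (hBv w hw hc)
    obtain ⟨hin0, hout0⟩ := hSKv_notB w hwB
    obtain ⟨hin, hout⟩ := hSA_eqA w hw hwv
    rw [happly w, hin0, hout0, hin, hout, applyMS_def]
    have hpw : pt (Sum.inl ⟨w, hw⟩) = p w := rfl
    rw [hpw]
    ring
  have hcasev : applyMS ωT St pt (Sum.inl ⟨v, hvA⟩) + ((a : ℤ) * k2 - k1)
      + applyMS ωB SK q ⟨v, hvB⟩ = applyMS ω S p v := by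
    obtain ⟨hin, hout⟩ := hSA_v
    obtain ⟨hinK, houtK⟩ := hSKv_eq v hvB
    rw [happly v, hin, hout, hinK, houtK, applyMS_def, applyMS_def, hqv]
    have hpv : pt (Sum.inl ⟨v, hvA⟩) = p v := rfl
    rw [hpv]
    ring
  have hk1le' : (k1 : ℤ) ≤ (tstar : ℤ) + (a : ℤ) * k2 := by exact_mod_cast hk1le
  have hvge : applyMS ωT St pt (Sum.inl ⟨v, hvA⟩) ≤ applyMS ω S p v := by
    rw [← hcasev]
    linarith [hSKval]
  have hnnS : ∀ w, 0 ≤ applyMS ω S p w := by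
    intro w
    by_cases hw : w ∈ A
    · by_cases hwv : w = v
      · subst hwv
        exact le_trans (hStnn _) hvge
      · rw [hcaseA w hw hwv]
        exact hStnn _
    · rw [hcaseB w hw]
      exact hSKnn _
  have hvalS : (1 : ℤ) ≤ applyMS ω S p x := by
    by_cases hxv : x = v
    · subst hxv
      refine le_trans ?_ hvge
      exact_mod_cast hStval
    · rw [hcaseA x hx hxv]
      exact_mod_cast hStval
  exact ms_reaches hω hp S hSadj hnnS hvalS
end Main

section Main2
variable {V : Type*} [Fintype V] [DecidableEq V]

lemma main2
    (G : SimpleGraph V)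
    (A B : Set V) (v : V)
    (hUnion : A ∪ B = Set.univ) (hInter : A ∩ B = {v})
    (hvA : v ∈ A) (hvB : v ∈ B)
    (hedges : ∀ u w : V, G.Adj u w → (u ∈ A ∧ w ∈ A) ∨ (u ∈ B ∧ w ∈ B))
    (ω : V → V → ℕ)
    (hω : ∀ u w : V, G.Adj u w → 2 ≤ ω u w)
    (a b : ℕ) (ha : 2 ≤ a)
    (hpi : ∀ t : ℕ, 1 ≤ t →
      piT (G.induce B) (fun c d => ω c.1 d.1) ⟨v, hvB⟩ t = a * t + b)
    (x : V) (hx : x ∈ A) (m : ℕ)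
    (hm : ∀ p : V → ℤ, IsDistrib p → size p = (m : ℤ) → Reaches G ω p x 1)
    (sb : ℕ) (hsb : m ≤ sb + b) :
    ∀ pb : (↥A ⊕ Unit) → ℤ, IsDistrib pb → size pb = (sb : ℤ) →
      Reaches (attachPendant G A v) (attachWeight ω A a) pb (Sum.inl ⟨x, hx⟩) 1 := by
  intro pb hpb hpbs
  have hBv : ∀ w : V, w ∈ A → w ∈ B → w = v := by
    intro w h1 h2
    have : w ∈ A ∩ B := ⟨h1, h2⟩
    rwa [hInter] at this
  have hnA : ∀ w : V, w ∉ A → w ∈ B := by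
    intro w h1
    have h2 : w ∈ A ∪ B := by rw [hUnion]; trivial
    exact ((Set.mem_union _ _ _).1 h2).resolve_left h1
  set ME := attachPendant G A v with hME
  set ωT := attachWeight ω A a with hωT
  set ωB := (fun c d : ↥B => ω c.1 d.1) with hωB
  set T0 : ℕ := (pb (Sum.inr ())).toNat with hT0def
  have hT0 : (T0 : ℤ) = pb (Sum.inr ()) := Int.toNat_of_nonneg (hpb _)
  set D : ℕ := T0 / a with hDdef
  have ha0 : 0 < a := by omega
  have haD : a * D ≤ T0 := by
    rw [hDdef, mul_comm]
    exact Nat.div_mul_le_self T0 a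
  have hT0lt : T0 < a * (D + 1) := by
    rw [hDdef, Nat.mul_add, mul_one]
    conv_lhs => rw [← Nat.div_add_mod T0 a]
    exact Nat.add_lt_add_left (Nat.mod_lt T0 ha0) _
  obtain ⟨W, hW⟩ : ∃ W, W = a * (D + 1) := ⟨_, rfl⟩
  rw [← hW] at hT0lt
  have hW2 : 2 ≤ W := by
    rw [hW]
    calc 2 = 2 * 1 := by ring
    _ ≤ a * (D + 1) := Nat.mul_le_mul ha (Nat.le_add_left 1 D)
  have haDW : a * D + a = W := by rw [hW]; ring
  -- a bad distribution on K
  have hnotin : ¬ ((W + b - 1) ∈ {mK : ℕ | ∀ pK : ↥B → ℤ, IsDistrib pK →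
      size pK = (mK : ℤ) → Reaches (G.induce B) ωB pK ⟨v, hvB⟩ (D + 1)}) := by
    intro hc
    have h1 := Nat.sInf_le hc
    have h2 := hpi (D + 1) (Nat.le_add_left 1 D)
    unfold piT at h2
    rw [← hW] at h2
    rw [h2] at h1
    omega
  simp only [Set.mem_setOf_eq] at hnotin
  push_neg at hnotin
  obtain ⟨qK, hqKd, hqKs, hqKn⟩ := hnotin
  -- the combined distribution on G
  set pA : V → ℤ := fun w => if hw : w ∈ A then pb (Sum.inl ⟨w, hw⟩) else 0 with hpAdef
  set pB : V → ℤ := fun w => if hw : w ∈ B then qK ⟨w, hw⟩ else 0 with hpBdef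
  set p : V → ℤ := fun w => pA w + pB w with hpdef
  have hpd : IsDistrib p := by
    intro w
    rw [hpdef]
    have h1 : 0 ≤ pA w := by
      rw [hpAdef]; dsimp only; split_ifs
      · exact hpb _
      · exact le_refl 0
    have h2 : 0 ≤ pB w := by
      rw [hpBdef]; dsimp only; split_ifs
      · exact hqKd _
      · exact le_refl 0
    exact add_nonneg h1 h2
  have hsizepA : size pA = (sb : ℤ) - T0 := by
    have h1 : ∑ c : ↥A, pA c.1 = ∑ w ∈ Finset.univ.filter (fun w => w ∈ A), pA w :=
      (Finset.sum_subtype _ (by simp) (fun w => pA w)).symm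
    have h2 : ∀ c : ↥A, pA c.1 = pb (Sum.inl c) := by
      intro c
      rw [hpAdef]
      dsimp only
      rw [dif_pos c.2]
    have h3 : size pb = (∑ c : ↥A, pb (Sum.inl c)) + pb (Sum.inr ()) := by
      unfold size
      rw [Fintype.sum_sum_type]
      simp
    have h4 : size pA = ∑ w ∈ Finset.univ.filter (fun w => w ∈ A), pA w := by
      unfold size
      rw [← Finset.sum_filter_add_sum_filter_not Finset.univ (fun w => w ∈ A) pA]
      have h5 : ∑ w ∈ Finset.univ.filter (fun w => w ∉ A), pA w = 0 := by
        apply Finset.sum_eq_zero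
        intro w hw
        simp only [Finset.mem_filter, Finset.mem_univ, true_and] at hw
        rw [hpAdef]
        dsimp only
        rw [dif_neg hw]
      rw [h5, add_zero]
    rw [h4, ← h1]
    rw [Finset.sum_congr rfl (fun c _ => h2 c)]
    rw [hpbs] at h3
    linarith [hT0]
  have hsizepB : size pB = ((W + b - 1 : ℕ) : ℤ) := by
    have h1 : ∑ c : ↥B, pB c.1 = ∑ w ∈ Finset.univ.filter (fun w => w ∈ B), pB w :=
      (Finset.sum_subtype _ (by simp) (fun w => pB w)).symm
    have h2 : ∀ c : ↥B, pB c.1 = qK c := by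
      intro c
      rw [hpBdef]
      dsimp only
      rw [dif_pos c.2]
    have h4 : size pB = ∑ w ∈ Finset.univ.filter (fun w => w ∈ B), pB w := by
      unfold size
      rw [← Finset.sum_filter_add_sum_filter_not Finset.univ (fun w => w ∈ B) pB]
      have h5 : ∑ w ∈ Finset.univ.filter (fun w => w ∉ B), pB w = 0 := by
        apply Finset.sum_eq_zero
        intro w hw
        simp only [Finset.mem_filter, Finset.mem_univ, true_and] at hw
        rw [hpBdef]
        dsimp only
        rw [dif_neg hw]
      rw [h5, add_zero]
    rw [h4, ← h1, Finset.sum_congr rfl (fun c _ => h2 c), ← hqKs]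
    rfl
  have hsizep : (m : ℤ) ≤ size p := by
    have h1 : size p = size pA + size pB := by
      unfold size
      rw [← Finset.sum_add_distrib]
    rw [h1, hsizepA, hsizepB]
    have h3 : (m : ℤ) ≤ (sb : ℤ) + b := by exact_mod_cast hsb
    have h4 : ((W + b - 1 : ℕ) : ℤ) ≥ (T0 : ℤ) + (b : ℤ) := by
      have h5 : T0 + b + 1 ≤ W + b := by omega
      omega
    linarith
  have hreach : Reaches G ω p x 1 := reaches_of_mem hm hpd hsizep
  obtain ⟨S, hSadj, hSnn, hSval⟩ := reaches_ms hpd hreach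
  -- split into A-moves and B-moves
  set PA2 : V × V → Prop := fun m' => m'.1 ∈ A ∧ m'.2 ∈ A with hPA2def
  set SA : Multiset (V × V) := S.filter PA2 with hSA2def
  set SB : Multiset (V × V) := S.filter (fun m' => ¬PA2 m') with hSB2def
  have hSsplit : SA + SB = S := Multiset.filter_add_not PA2 S
  have hSAmem : ∀ m' ∈ SA, m'.1 ∈ A ∧ m'.2 ∈ A := fun m' hm' => (Multiset.mem_filter.1 hm').2
  have hSBmem : ∀ m' ∈ SB, m'.1 ∈ B ∧ m'.2 ∈ B := by
    intro m' hm'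
    have h1 := (Multiset.mem_filter.1 hm').2
    have h2 := hSadj m' (Multiset.mem_of_mem_filter hm')
    exact (hedges _ _ h2).resolve_left h1
  -- lift the B-moves to the subtype
  set SBl : Multiset (↥B × ↥B) := SB.pmap
    (fun m' h => ((⟨m'.1, h.1⟩ : ↥B), (⟨m'.2, h.2⟩ : ↥B))) hSBmem with hSBldef
  have hSBlmap : SBl.map (Prod.map Subtype.val Subtype.val) = SB := by
    rw [hSBldef, Multiset.map_pmap]
    exact (Multiset.pmap_eq_map _ id SB hSBmem).trans (Multiset.map_id SB)
  have hSB_eq : ∀ (w : V) (hw : w ∈ B),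
      inC SB w = inC SBl (⟨w, hw⟩ : ↥B) ∧ outC ω SB w = outC ωB SBl ⟨w, hw⟩ := by
    intro w hw
    have hfil2 : SBl.filter (fun m' => (m'.2 : V) = w) = SBl.filter (fun m' => m'.2 = ⟨w, hw⟩) :=
      Multiset.filter_congr (fun m' _ => ⟨fun h => Subtype.ext h, fun h => by rw [h]⟩)
    have hfil1 : SBl.filter (fun m' => (m'.1 : V) = w) = SBl.filter (fun m' => m'.1 = ⟨w, hw⟩) :=
      Multiset.filter_congr (fun m' _ => ⟨fun h => Subtype.ext h, fun h => by rw [h]⟩)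
    constructor
    · rw [← hSBlmap, inC_map, hfil2]; rfl
    · rw [← hSBlmap, outC_map, hfil1]; rfl
  have hSB_not : ∀ w : V, w ∉ B → inC SB w = 0 ∧ outC ω SB w = 0 := by
    intro w hw
    constructor
    · unfold inC
      have hnil := Multiset.filter_eq_nil.2 (by intro m' hm' hc; exact hw (hc ▸ (hSBmem m' hm').2) :
        ∀ m' ∈ SB, ¬(m'.2 = w))
      rw [hnil]; simp
    · unfold outC
      have hnil := Multiset.filter_eq_nil.2 (by intro m' hm' hc; exact hw (hc ▸ (hSBmem m' hm').1) :
        ∀ m' ∈ SB, ¬(m'.1 = w))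
      rw [hnil]; simp
  have hSA_not : ∀ w : V, w ∉ A → inC SA w = 0 ∧ outC ω SA w = 0 := by
    intro w hw
    constructor
    · unfold inC
      have hnil := Multiset.filter_eq_nil.2 (by intro m' hm' hc; exact hw (hc ▸ (hSAmem m' hm').2) :
        ∀ m' ∈ SA, ¬(m'.2 = w))
      rw [hnil]; simp
    · unfold outC
      have hnil := Multiset.filter_eq_nil.2 (by intro m' hm' hc; exact hw (hc ▸ (hSAmem m' hm').1) :
        ∀ m' ∈ SA, ¬(m'.1 = w))
      rw [hnil]; simp
  have hSBladj : ∀ m' ∈ SBl, (G.induce B).Adj m'.1 m'.2 := by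
    intro m' hm'
    rw [hSBldef] at hm'
    obtain ⟨n, hn, heq⟩ := Multiset.mem_pmap.1 hm'
    subst heq
    exact hSadj n (Multiset.mem_of_mem_filter hn)
  have happS : ∀ w : V, applyMS ω S p w
      = p w + inC SA w + inC SB w - outC ω SA w - outC ω SB w := by
    intro w
    rw [← hSsplit, applyMS_def, inC_add, outC_add]
    ring
  have hqKoff : ∀ (w : V) (hw : w ∈ B), w ≠ v → p w = qK ⟨w, hw⟩ := by
    intro w hw hwv
    have hwA : w ∉ A := fun hc => hwv (hBv w hc hw)
    rw [hpdef]; dsimp only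
    rw [hpAdef, hpBdef]; dsimp only
    rw [dif_neg hwA, dif_pos hw]
    ring
  have hpveq : p v = pb (Sum.inl ⟨v, hvA⟩) + qK ⟨v, hvB⟩ := by
    rw [hpdef]; dsimp only
    rw [hpAdef, hpBdef]; dsimp only
    rw [dif_pos hvA, dif_pos hvB]
  have happBl : ∀ (w : V) (hw : w ∈ B), w ≠ v →
      applyMS ωB SBl qK ⟨w, hw⟩ = applyMS ω S p w := by
    intro w hw hwv
    have hwA : w ∉ A := fun hc => hwv (hBv w hc hw)
    obtain ⟨hin, hout⟩ := hSB_eq w hw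
    obtain ⟨hin0, hout0⟩ := hSA_not w hwA
    rw [happS w, hin, hout, hin0, hout0, applyMS_def, hqKoff w hw hwv]
    ring
  have hvD : applyMS ωB SBl qK ⟨v, hvB⟩ ≤ (D : ℤ) := by
    by_contra hc
    push_neg at hc
    apply hqKn
    have hωB2 : ∀ c d : ↥B, (G.induce B).Adj c d → 2 ≤ ωB c d := fun c d h => hω _ _ h
    apply ms_reaches hωB2 hqKd SBl hSBladj
    · rintro ⟨w, hw⟩
      by_cases hcv : w = v
      · subst hcv
        have hrw : applyMS ωB SBl qK ⟨w, hw⟩ = applyMS ωB SBl qK ⟨w, hvB⟩ := rfl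
        rw [hrw]
        linarith
      · rw [happBl w hw hcv]
        exact hSnn w
    · push_cast
      linarith
  set k : ℕ := (applyMS ωB SBl qK ⟨v, hvB⟩).toNat with hkdef
  have hkD : k ≤ D := Int.toNat_le.2 hvD
  have hkge : applyMS ωB SBl qK ⟨v, hvB⟩ ≤ (k : ℤ) := Int.self_le_toNat _
  -- build the multiset of moves on the pendant graph
  set φ : V → ↥A ⊕ Unit := fun w => if hw : w ∈ A then Sum.inl ⟨w, hw⟩ else Sum.inr () with hφdef
  set SAt : Multiset ((↥A ⊕ Unit) × (↥A ⊕ Unit)) := SA.map (Prod.map φ φ) with hSAtdef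
  set rep : Multiset ((↥A ⊕ Unit) × (↥A ⊕ Unit)) :=
    Multiset.replicate k (Sum.inr (), Sum.inl ⟨v, hvA⟩) with hrepdef
  set St : Multiset ((↥A ⊕ Unit) × (↥A ⊕ Unit)) := SAt + rep with hStdef
  have hSAt_eq : ∀ (w : V) (hw : w ∈ A),
      inC SAt (Sum.inl ⟨w, hw⟩) = inC SA w ∧
      outC ωT SAt (Sum.inl ⟨w, hw⟩) = outC ω SA w := by
    intro w hw
    have hfil2 : SA.filter (fun m' => φ m'.2 = Sum.inl ⟨w, hw⟩)
        = SA.filter (fun m' => m'.2 = w) := by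
      apply Multiset.filter_congr
      intro m' hm'
      have h2A := (hSAmem m' hm').2
      rw [hφdef]; dsimp only
      rw [dif_pos h2A]
      constructor
      · intro h
        exact Subtype.ext_iff.1 (Sum.inl.inj h)
      · intro h
        exact congrArg Sum.inl (Subtype.ext h)
    have hfil1 : SA.filter (fun m' => φ m'.1 = Sum.inl ⟨w, hw⟩)
        = SA.filter (fun m' => m'.1 = w) := by
      apply Multiset.filter_congr
      intro m' hm'
      have h1A := (hSAmem m' hm').1
      rw [hφdef]; dsimp only
      rw [dif_pos h1A]
      constructor
      · intro h
        exact Subtype.ext_iff.1 (Sum.inl.inj h)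
      · intro h
        exact congrArg Sum.inl (Subtype.ext h)
    constructor
    · rw [hSAtdef, inC_map, hfil2]
      rfl
    · rw [hSAtdef, outC_map, hfil1]
      unfold outC
      apply congrArg Multiset.sum
      apply Multiset.map_congr rfl
      intro m' hm'
      have hmem := Multiset.mem_of_mem_filter hm'
      obtain ⟨h1A, h2A⟩ := hSAmem m' hmem
      rw [hφdef]; dsimp only
      rw [dif_pos h1A, dif_pos h2A]
      rfl
  have hSAt_inr : inC SAt (Sum.inr ()) = 0 ∧ outC ωT SAt (Sum.inr ()) = 0 := by
    constructor
    · rw [hSAtdef, inC_map]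
      have hnil := Multiset.filter_eq_nil.2 (by
        intro m' hm' hc
        have h2A := (hSAmem m' hm').2
        rw [hφdef] at hc; dsimp only at hc
        rw [dif_pos h2A] at hc
        exact Sum.inl_ne_inr hc : ∀ m' ∈ SA, ¬(φ m'.2 = Sum.inr ()))
      rw [hnil]; simp
    · rw [hSAtdef, outC_map]
      have hnil := Multiset.filter_eq_nil.2 (by
        intro m' hm' hc
        have h1A := (hSAmem m' hm').1
        rw [hφdef] at hc; dsimp only at hc
        rw [dif_pos h1A] at hc
        exact Sum.inl_ne_inr hc : ∀ m' ∈ SA, ¬(φ m'.1 = Sum.inr ()))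
      rw [hnil]; simp
  have hStadj : ∀ m' ∈ St, ME.Adj m'.1 m'.2 := by
    intro m' hm'
    rw [hStdef] at hm'
    rcases Multiset.mem_add.1 hm' with h | h
    · obtain ⟨n, hn, rfl⟩ := Multiset.mem_map.1 h
      obtain ⟨h1, h2⟩ := hSAmem n hn
      have hadj := hSadj n (Multiset.mem_of_mem_filter hn)
      show ME.Adj (φ n.1) (φ n.2)
      rw [hφdef]; dsimp only
      rw [dif_pos h1, dif_pos h2]
      exact hadj
    · rw [hrepdef] at h
      rw [Multiset.eq_of_mem_replicate h]
      show ((⟨v, hvA⟩ : ↥A) : V) = v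
      rfl
  have happSt : ∀ z, applyMS ωT St pb z
      = pb z + inC SAt z + inC rep z - outC ωT SAt z - outC ωT rep z := by
    intro z
    rw [hStdef, applyMS_def, inC_add, outC_add]
    ring
  have hSBveq : inC SB v - outC ω SB v = applyMS ωB SBl qK ⟨v, hvB⟩ - qK ⟨v, hvB⟩ := by
    obtain ⟨hin, hout⟩ := hSB_eq v hvB
    rw [hin, hout, applyMS_def]
    ring
  -- nonnegativity and target value on the pendant graph
  have hval_v : applyMS ω S p v ≤ applyMS ωT St pb (Sum.inl ⟨v, hvA⟩) := by
    rw [happSt, happS]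
    obtain ⟨hin, hout⟩ := hSAt_eq v hvA
    rw [hin, hout]
    rw [hrepdef, inC_replicate, outC_replicate]
    rw [if_pos rfl, if_neg (by simp)]
    rw [hpveq]
    have h1 : inC SB v - outC ω SB v ≤ (k : ℤ) - qK ⟨v, hvB⟩ := by
      rw [hSBveq]
      linarith
    linarith
  have hval_w : ∀ (w : V) (hw : w ∈ A), w ≠ v →
      applyMS ωT St pb (Sum.inl ⟨w, hw⟩) = applyMS ω S p w := by
    intro w hw hwv
    have hwB : w ∉ B := fun hc => hwv (hBv w hw hc)
    rw [happSt, happS]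
    obtain ⟨hin, hout⟩ := hSAt_eq w hw
    rw [hin, hout]
    obtain ⟨hinB, houtB⟩ := hSB_not w hwB
    rw [hinB, houtB]
    rw [hrepdef, inC_replicate, outC_replicate]
    rw [if_neg (by
      intro hc
      exact hwv (Subtype.ext_iff.1 (Sum.inl.inj hc)).symm), if_neg (by simp)]
    have hpw : p w = pb (Sum.inl ⟨w, hw⟩) := by
      rw [hpdef]; dsimp only
      rw [hpAdef, hpBdef]; dsimp only
      rw [dif_pos hw, dif_neg hwB]
      ring
    rw [hpw]
  have hnnSt : ∀ z, 0 ≤ applyMS ωT St pb z := by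
    rintro (⟨w, hw⟩ | u)
    · by_cases hwv : w = v
      · subst hwv
        have hrw : applyMS ωT St pb (Sum.inl ⟨w, hw⟩)
            = applyMS ωT St pb (Sum.inl ⟨w, hvA⟩) := rfl
        rw [hrw]
        exact le_trans (hSnn w) hval_v
      · rw [hval_w w hw hwv]
        exact hSnn w
    · rw [happSt]
      obtain ⟨hin, hout⟩ := hSAt_inr
      rw [hin, hout]
      rw [hrepdef, inC_replicate, outC_replicate]
      rw [if_neg (by simp), if_pos rfl]
      have hwt : (ωT (Sum.inr ()) (Sum.inl ⟨v, hvA⟩) : ℤ) = (a : ℤ) := rfl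
      rw [hwt]
      have h1 : (k : ℤ) * a ≤ (T0 : ℤ) := by
        have h2 : k * a ≤ D * a := Nat.mul_le_mul_right a hkD
        have h3 : D * a ≤ T0 := by rw [mul_comm]; exact haD
        exact_mod_cast le_trans h2 h3
      have hpbu : pb (Sum.inr u) = (T0 : ℤ) := by
        cases u
        exact hT0.symm
      rw [hpbu]
      linarith
  have hvalSt : (1 : ℤ) ≤ applyMS ωT St pb (Sum.inl ⟨x, hx⟩) := by
    by_cases hxv : x = v
    · subst hxv
      have hrw : applyMS ωT St pb (Sum.inl ⟨x, hx⟩)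
          = applyMS ωT St pb (Sum.inl ⟨x, hvA⟩) := rfl
      rw [hrw]
      refine le_trans ?_ (le_trans hval_v (le_refl _))
      exact_mod_cast hSval
    · rw [hval_w x hx hxv]
      exact_mod_cast hSval
  have hωT2 : ∀ z1 z2, ME.Adj z1 z2 → 2 ≤ ωT z1 z2 := by
    rintro (c | u) (d | u') hadj
    · exact hω _ _ hadj
    · exact ha
    · exact ha
    · exact absurd hadj (by simp [hME, attachPendant])
  exact ms_reaches hωT2 hpb St hStadj hnnSt hvalSt
end Main2

/-- Cut-vertex reduction: if `G = H ∪ K` with `V(H) ∩ V(K) = {v}`,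
`v` a cut vertex, and `π_t(K_ω, v) = a·t + b` for all `t ≥ 1`, then replacing `K` by a
single pendant vertex `u` attached to `v` with edge weight `a` gives
`π(G_ω, x) = π(G̃_ω̃, x) + b` for every goal vertex `x ∈ V(H)`. -/

theorem statement3 {V : Type*} [Fintype V] [DecidableEq V]
    (G : SimpleGraph V) (hG : G.Connected)
    (A B : Set V) (v : V)
    (hUnion : A ∪ B = Set.univ) (hInter : A ∩ B = {v})
    (hvA : v ∈ A) (hvB : v ∈ B)
    (hedges : ∀ u w : V, G.Adj u w → (u ∈ A ∧ w ∈ A) ∨ (u ∈ B ∧ w ∈ B))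
    (hH : (G.induce A).Connected) (hK : (G.induce B).Connected)
    (ω : V → V → ℕ) (hsym : ∀ u w : V, ω u w = ω w u)
    (hω : ∀ u w : V, G.Adj u w → 2 ≤ ω u w)
    (a b : ℕ) (ha : 2 ≤ a)
    (hpi : ∀ t : ℕ, 1 ≤ t →
      piT (G.induce B) (fun c d => ω c.1 d.1) ⟨v, hvB⟩ t = a * t + b)
    (x : V) (hx : x ∈ A) :
    piT G ω x 1 = piT (attachPendant G A v) (attachWeight ω A a) (Sum.inl ⟨x, hx⟩) 1 + b := by
  have hωT2 : ∀ z1 z2, (attachPendant G A v).Adj z1 z2 → 2 ≤ attachWeight ω A a z1 z2 := by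
    rintro (c | u) (d | u') hadj
    · exact hω _ _ hadj
    · exact ha
    · exact ha
    · exact absurd hadj (by simp [attachPendant])
  obtain ⟨m0, hm0⟩ := pset_nonempty hG hω x
  have hSne : {m : ℕ | ∀ p : V → ℤ, IsDistrib p → size p = (m : ℤ) →
      Reaches G ω p x 1}.Nonempty := ⟨m0, hm0⟩
  have hnm : ∀ p : V → ℤ, IsDistrib p → size p = ((piT G ω x 1 : ℕ) : ℤ) →
      Reaches G ω p x 1 := Nat.sInf_mem hSne
  have hmain2 := main2 G A B v hUnion hInter hvA hvB hedges ω hω a b ha hpi x hx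
    (piT G ω x 1) hnm
  have hb_lt : b < piT G ω x 1 := by
    by_contra hble
    push_neg at hble
    have h0 := hmain2 0 (by omega)
    have hzd : IsDistrib (fun _ : ↥A ⊕ Unit => (0 : ℤ)) := fun _ => le_refl 0
    have hzs : size (fun _ : ↥A ⊕ Unit => (0 : ℤ)) = ((0 : ℕ) : ℤ) := by simp [size]
    have hre := h0 _ hzd hzs
    exact zero_not_reach hωT2 hzd (by simpa using hzs) _ (le_refl 1) hre
  have hmemT := hmain2 (piT G ω x 1 - b) (by omega)
  have hTne : {m : ℕ | ∀ pb : (↥A ⊕ Unit) → ℤ, IsDistrib pb → size pb = (m : ℤ) →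
      Reaches (attachPendant G A v) (attachWeight ω A a) pb (Sum.inl ⟨x, hx⟩) 1}.Nonempty :=
    ⟨piT G ω x 1 - b, hmemT⟩
  have hmt : ∀ pb : (↥A ⊕ Unit) → ℤ, IsDistrib pb →
      size pb = ((piT (attachPendant G A v) (attachWeight ω A a) (Sum.inl ⟨x, hx⟩) 1 : ℕ) : ℤ) →
      Reaches (attachPendant G A v) (attachWeight ω A a) pb (Sum.inl ⟨x, hx⟩) 1 :=
    Nat.sInf_mem hTne
  have hmain1 := main1 G A B v hUnion hInter hvA hvB hedges ω hω a b ha hpi x hx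
    (piT (attachPendant G A v) (attachWeight ω A a) (Sum.inl ⟨x, hx⟩) 1) hmt
  have hle1 : piT G ω x 1
      ≤ piT (attachPendant G A v) (attachWeight ω A a) (Sum.inl ⟨x, hx⟩) 1 + b :=
    Nat.sInf_le hmain1
  have hle2 : piT (attachPendant G A v) (attachWeight ω A a) (Sum.inl ⟨x, hx⟩) 1
      ≤ piT G ω x 1 - b := Nat.sInf_le hmemT
  omega
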